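/- Let G act on (X,μ) by measure-preserving transformations and let α be a finite generating partition. Then the set of finite partitions combinatorially equivalent to α is dense (in the Rokhlin metric) in the set of all finite generating partitions. -/

import Mathlib

open MeasureTheory Real
open scoped symmDiff ENNReal

namespace Bowen

variable {X : Type*} [MeasurableSpace X]

/-- Shannon entropy of the (countable) partition of `X` into fibers of `α`. -/
noncomputable def entropy {ι : Type*} (μ : Measure X) (α : X → ι) : ℝ :=
  ∑' i, Real.negMulLog (μ (α ⁻¹' {i})).toReal

/-- Conditional entropy `H(α|β)` of the fiber partition of `α` given that of `β`. -/
noncomputable def condEntropy {ι κ : Type*} (μ : Measure X) (α : X → ι) (β : X → κ) : ℝ :=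
  ∑' p : ι × κ,
    -((μ (α ⁻¹' {p.1} ∩ β ⁻¹' {p.2})).toReal *
      Real.log ((μ (α ⁻¹' {p.1} ∩ β ⁻¹' {p.2})).toReal / (μ (β ⁻¹' {p.2})).toReal))

/-- The Rokhlin distance `d(α,β) = H(α|β) + H(β|α)`. -/
noncomputable def rokhlin {ι κ : Type*} (μ : Measure X) (α : X → ι) (β : X → κ) : ℝ :=
  condEntropy μ α β + condEntropy μ β α

/-- A finite measurable partition, presented as a measurable map to `ℕ` with finite range. -/
def IsFinPart (α : X → ℕ) : Prop := Measurable α ∧ (Set.range α).Finite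

/-- `α` refines `β` (mod null sets): `β` factors a.e. through `α`. -/
def RefinesI {ι κ : Type*} (μ : Measure X) (α : X → ι) (β : X → κ) : Prop :=
  ∃ h : ι → κ, ∀ᵐ x ∂μ, β x = h (α x)

/-- The join `α ∨ β` of two `ℕ`-indexed partitions, encoded via `Nat.pair`. -/
def joinN (α β : X → ℕ) : X → ℕ := fun x => Nat.pair (α x) (β x)

/-- The translated partition `gα`, with atoms `gA = {x | g⁻¹x ∈ A}` for atoms `A` of `α`. -/
def smulPart {G : Type*} [Group G] [MulAction G X] {ι : Type*} (g : G) (α : X → ι) : X → ι :=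
  fun x => α (g⁻¹ • x)

/-- Join of a list of `ℕ`-indexed partitions. -/
def joinList (l : List (X → ℕ)) : X → ℕ :=
  l.foldr (fun a r x => Nat.pair (a x) (r x)) (fun _ => 0)

/-- The join `α^F = ⋁_{g ∈ F} gα` over a finite set of group elements. -/
noncomputable def joinOver {G : Type*} [Group G] [MulAction G X] (F : Finset G) (α : X → ℕ) : X → ℕ :=
  joinList (F.toList.map (fun g => smulPart g α))

/-- The smallest `G`-invariant σ-algebra containing the partition `α`. -/
def genSA (G : Type*) [Group G] [MulAction G X] {ι : Type*} (α : X → ι) :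
    MeasurableSpace X :=
  MeasurableSpace.generateFrom {s | ∃ (g : G) (i : ι), s = {x | α (g⁻¹ • x) = i}}

/-- `α` is a generating partition: every measurable set agrees mod `μ`-null sets with a set
in the smallest `G`-invariant σ-algebra containing `α`. -/
def IsGenerating (G : Type*) [Group G] [MulAction G X] {ι : Type*} (μ : Measure X)
    (α : X → ι) : Prop :=
  ∀ s : Set X, MeasurableSet s → ∃ t : Set X, MeasurableSet[genSA G α] t ∧ μ (s ∆ t) = 0

/-- Combinatorial equivalence: `α ≤ β^L` and `β ≤ α^M` for some finite `L, M ⊆ G`. -/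
def CombEquiv (G : Type*) [Group G] [MulAction G X] (μ : Measure X) (α β : X → ℕ) : Prop :=
  ∃ L M : Finset G, RefinesI μ (joinOver L β) α ∧ RefinesI μ (joinOver M α) β

/-- `α` and `β` induce the same partition mod null sets. -/
def SamePart (μ : Measure X) (α β : X → ℕ) : Prop := RefinesI μ α β ∧ RefinesI μ β α

/-- `σ` is a simple splitting of `α`: `σ = α ∨ sβ` (as partitions, mod null sets) for some
`s ∈ S` and some coarsening `β` of `α`. -/
def SimpleSplit {G : Type*} [Group G] [MulAction G X] (μ : Measure X) (S : Finset G)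
    (σ α : X → ℕ) : Prop :=
  ∃ s ∈ S, ∃ β : X → ℕ, RefinesI μ α β ∧ SamePart μ σ (joinN α (smulPart s β))

/-- `σ` is a splitting of `α`: obtained from `α` by finitely many simple splittings. -/
def IsSplitting {G : Type*} [Group G] [MulAction G X] (μ : Measure X) (S : Finset G)
    (σ α : X → ℕ) : Prop :=
  Relation.ReflTransGen (fun a b => SimpleSplit μ S b a) α σ

/-- The ball of radius `n` about the identity for the word metric of `S`:
all products of at most `n` elements of `S`. -/
def ballF {G : Type*} [Group G] [DecidableEq G] (S : Finset G) : ℕ → Finset G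
  | 0 => {1}
  | n + 1 => ballF S n ∪ (S ×ˢ ballF S n).image (fun p => p.1 * p.2)

/-- The Cayley graph of `(G,S)` (as a simple graph). -/
def cayley {G : Type*} [Group G] (S : Finset G) : SimpleGraph G :=
  SimpleGraph.fromRel (fun g h => g⁻¹ * h ∈ S)

/-- The symmetric generating set `S = {s₁^{±1},...,s_r^{±1}}` of the rank `r` free group. -/
noncomputable def genS (r : ℕ) : Finset (FreeGroup (Fin r)) :=
  letI := Classical.decEq (FreeGroup (Fin r))
  (Finset.univ.image fun i : Fin r => FreeGroup.of i) ∪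
    (Finset.univ.image fun i : Fin r => (FreeGroup.of i)⁻¹)

/-- The word-metric ball of radius `n` about `e` in the rank `r` free group. -/
noncomputable def ballFree (r : ℕ) (n : ℕ) : Finset (FreeGroup (Fin r)) :=
  letI := Classical.decEq (FreeGroup (Fin r))
  ballF (genS r) n

/-- Bowen's functional `F(α) = (1-2r)H(α) + ∑ᵢ H(α ∨ sᵢα)`. -/
noncomputable def Ffun (r : ℕ) {X : Type*} [MeasurableSpace X]
    [MulAction (FreeGroup (Fin r)) X] (μ : Measure X) (α : X → ℕ) : ℝ :=
  (1 - 2 * (r : ℝ)) * entropy μ α +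
    ∑ i : Fin r, entropy μ (joinN α (smulPart (FreeGroup.of i) α))

/-- Conditional entropy of the partition `α` relative to a sub-σ-algebra `m`:
`H(α|m) = ∫ -log μ(A_x|m)(x) dμ(x)`. -/
noncomputable def condEntropySigma (μ : Measure X) (α : X → ℕ) (m : MeasurableSpace X) : ℝ :=
  ∫ x, -Real.log ((μ[Set.indicator (α ⁻¹' {α x}) (fun _ => (1 : ℝ))|m]) x) ∂μ

end Bowen

open Bowen
namespace Bowen

variable {X : Type*} [MeasurableSpace X] {G : Type*} [Group G] [MulAction G X]

/-- Decode a `foldr Nat.pair`-encoded list of known length. -/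
def decN : ℕ → ℕ → List ℕ
  | 0, _ => []
  | k + 1, n => n.unpair.1 :: decN k n.unpair.2

lemma decN_foldr (l : List ℕ) : decN l.length (l.foldr Nat.pair 0) = l := by
  induction l with
  | nil => rfl
  | cons a l ih => simp [decN, Nat.unpair_pair, ih]

lemma joinList_eq (l : List (X → ℕ)) (x : X) :
    joinList l x = (l.map (fun a => a x)).foldr Nat.pair 0 := by
  induction l with
  | nil => rfl
  | cons a l ih => simp [joinList, List.foldr] at ih ⊢; rw [ih]

lemma joinOver_eq (F : Finset G) (σ : X → ℕ) (x : X) :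
    joinOver F σ x = (F.toList.map (fun g => σ (g⁻¹ • x))).foldr Nat.pair 0 := by
  rw [joinOver, joinList_eq, List.map_map]; rfl

/-- Extract the component at `k` from an encoded join over `L`. -/
def extN [DecidableEq G] (L : List G) (k : G) (n : ℕ) : ℕ :=
  (decN L.length n).getD (L.idxOf k) 0

lemma extN_spec [DecidableEq G] (F : Finset G) (σ : X → ℕ) (k : G) (hk : k ∈ F) (x : X) :
    extN F.toList k (joinOver F σ x) = σ (k⁻¹ • x) := by
  classical
  rw [joinOver_eq, extN]
  have hlen : F.toList.length = (F.toList.map (fun g => σ (g⁻¹ • x))).length := by simp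
  rw [hlen, decN_foldr]
  have hk' : k ∈ F.toList := by simpa using hk
  have hidx : F.toList.idxOf k < F.toList.length := List.idxOf_lt_length_iff.2 hk'
  rw [List.getD_eq_getElem _ _ (by simpa using hidx)]
  simp [List.getElem_map, List.getElem_idxOf hidx]

lemma exists_comp_joinOver (F : Finset G) (σ δ' : X → ℕ) (c : G → ℕ → ℕ)
    (hc : ∀ g ∈ F, ∀ x, δ' (g⁻¹ • x) = c g (σ x)) :
    ∃ r : ℕ → ℕ, ∀ x, joinOver F δ' x = r (σ x) := by
  refine ⟨fun n => (F.toList.map (fun g => c g n)).foldr Nat.pair 0, fun x => ?_⟩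
  rw [joinOver_eq]
  congr 1
  refine List.map_congr_left fun g hg => hc g (by simpa using hg) x

lemma joinOver_mono (F M : Finset G) (σ : X → ℕ) (h : F ⊆ M) :
    ∃ r : ℕ → ℕ, ∀ x, joinOver F σ x = r (joinOver M σ x) := by
  classical
  exact exists_comp_joinOver F (joinOver M σ) σ (fun g => extN M.toList g)
    (fun g hg x => (extN_spec M σ g (h hg) x).symm)

lemma smul_joinOver (g : G) (F M : Finset G) (σ : X → ℕ) (h : ∀ e ∈ F, g * e ∈ M) :
    ∃ r : ℕ → ℕ, ∀ x, joinOver F σ (g⁻¹ • x) = r (joinOver M σ x) := by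
  classical
  refine ⟨fun n => (F.toList.map (fun e => extN M.toList (g * e) n)).foldr Nat.pair 0,
    fun x => ?_⟩
  rw [joinOver_eq]
  congr 1
  refine List.map_congr_left fun e he => ?_
  rw [extN_spec M σ (g * e) (h e (by simpa using he)) x, mul_inv_rev, mul_smul]

end Bowen
set_option linter.unusedSectionVars false
namespace Bowen

variable {X : Type*} [MeasurableSpace X] {G : Type*} [Group G] [MulAction G X]

lemma joinN_preimage (a b : X → ℕ) (n : ℕ) :
    joinN a b ⁻¹' {n} =
      if Nat.pair n.unpair.1 n.unpair.2 = n then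
        a ⁻¹' {n.unpair.1} ∩ b ⁻¹' {n.unpair.2} else ∅ := by
  ext x
  constructor
  · rintro (h : Nat.pair (a x) (b x) = n)
    subst h
    simp [Nat.unpair_pair]
  · intro h
    split_ifs at h with hp
    · obtain ⟨h1, h2⟩ := h
      simp only [Set.mem_preimage, Set.mem_singleton_iff] at h1 h2
      show Nat.pair (a x) (b x) = n
      rw [h1, h2, hp]
    · exact h.elim

lemma measurable_joinN {a b : X → ℕ} (ha : Measurable a) (hb : Measurable b) :
    Measurable (joinN a b) := by
  refine measurable_to_countable' fun n => ?_
  rw [joinN_preimage]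
  split_ifs
  · exact (ha (measurableSet_singleton _)).inter (hb (measurableSet_singleton _))
  · exact MeasurableSet.empty

lemma finRange_joinN {a b : X → ℕ} (ha : (Set.range a).Finite) (hb : (Set.range b).Finite) :
    (Set.range (joinN a b)).Finite := by
  refine Set.Finite.subset ((ha.prod hb).image (fun p => Nat.pair p.1 p.2)) ?_
  rintro - ⟨x, rfl⟩
  exact ⟨(a x, b x), ⟨⟨x, rfl⟩, ⟨x, rfl⟩⟩, rfl⟩

lemma isFinPart_joinN {a b : X → ℕ} (ha : IsFinPart a) (hb : IsFinPart b) :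
    IsFinPart (joinN a b) :=
  ⟨measurable_joinN ha.1 hb.1, finRange_joinN ha.2 hb.2⟩

lemma isFinPart_comp {a : X → ℕ} (ha : IsFinPart a) (f : ℕ → ℕ) : IsFinPart (f ∘ a) :=
  ⟨Measurable.of_discrete.comp ha.1, (ha.2.image f).subset (by rw [Set.range_comp])⟩

lemma isFinPart_smulPart (hmp : ∀ g : G, Measurable (fun x : X => g • x))
    {a : X → ℕ} (ha : IsFinPart a) (g : G) : IsFinPart (smulPart g a) := by
  refine ⟨ha.1.comp (hmp g⁻¹), ha.2.subset ?_⟩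
  rintro - ⟨x, rfl⟩; exact ⟨g⁻¹ • x, rfl⟩

lemma joinList_nil : joinList ([] : List (X → ℕ)) = fun _ => 0 := rfl

lemma joinList_cons (a : X → ℕ) (l : List (X → ℕ)) :
    joinList (a :: l) = joinN a (joinList l) := rfl

lemma isFinPart_joinList {l : List (X → ℕ)} (h : ∀ a ∈ l, IsFinPart a) :
    IsFinPart (joinList l) := by
  induction l with
  | nil =>
    exact ⟨measurable_const, (Set.finite_singleton 0).subset (by rintro - ⟨x, rfl⟩; rfl)⟩
  | cons a l ih =>
    rw [joinList_cons]
    exact isFinPart_joinN (h a (by simp)) (ih fun b hb => h b (by simp [hb]))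

lemma isFinPart_joinOver (hmp : ∀ g : G, Measurable (fun x : X => g • x))
    {a : X → ℕ} (ha : IsFinPart a) (F : Finset G) : IsFinPart (joinOver F a) := by
  refine isFinPart_joinList fun b hb => ?_
  simp only [List.mem_map] at hb
  obtain ⟨g, -, rfl⟩ := hb
  exact isFinPart_smulPart hmp ha g

end Bowen
set_option linter.unusedSectionVars false
namespace Bowen

variable {X : Type*} [MeasurableSpace X] {G : Type*} [Group G] [MulAction G X]

lemma measurable_joinList {l : List (X → ℕ)} (h : ∀ a ∈ l, Measurable a) :
    Measurable (joinList l) := by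
  induction l with
  | nil => exact measurable_const
  | cons a l ih =>
    rw [joinList_cons]
    exact measurable_joinN (h a (by simp)) (ih fun b hb => h b (by simp [hb]))

lemma measurable_joinOver {σ : X → ℕ} (hσ : Measurable σ)
    (hmp : ∀ g : G, Measurable (fun x : X => g • x)) (F : Finset G) :
    Measurable (joinOver F σ) := by
  refine measurable_joinList fun b hb => ?_
  simp only [List.mem_map] at hb
  obtain ⟨g, -, rfl⟩ := hb
  exact hσ.comp (hmp g⁻¹)

end Bowen
set_option linter.unusedSectionVars false
namespace Bowen

variable {X : Type*} [MeasurableSpace X] {G : Type*} [Group G] [MulAction G X]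

/-- The class of sets exactly measurable w.r.t. a finite join of translates of `σ`. -/
def Cyl (σ : X → ℕ) (D : Set X) : Prop :=
  ∃ (F : Finset G) (J : Set ℕ), D = joinOver F σ ⁻¹' J

lemma Cyl.empty (σ : X → ℕ) : Cyl (G := G) σ (∅ : Set X) :=
  ⟨∅, ∅, by simp⟩

lemma Cyl.compl {σ : X → ℕ} {D : Set X} (h : Cyl (G := G) σ D) : Cyl (G := G) σ Dᶜ := by
  obtain ⟨F, J, rfl⟩ := h
  exact ⟨F, Jᶜ, rfl⟩

lemma Cyl.union {σ : X → ℕ} {D₁ D₂ : Set X} (h1 : Cyl (G := G) σ D₁)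
    (h2 : Cyl (G := G) σ D₂) : Cyl (G := G) σ (D₁ ∪ D₂) := by
  classical
  obtain ⟨F₁, J₁, rfl⟩ := h1
  obtain ⟨F₂, J₂, rfl⟩ := h2
  obtain ⟨r₁, hr₁⟩ := joinOver_mono F₁ (F₁ ∪ F₂) σ Finset.subset_union_left
  obtain ⟨r₂, hr₂⟩ := joinOver_mono F₂ (F₁ ∪ F₂) σ Finset.subset_union_right
  refine ⟨F₁ ∪ F₂, r₁ ⁻¹' J₁ ∪ r₂ ⁻¹' J₂, ?_⟩
  ext x
  simp [hr₁ x, hr₂ x]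

lemma accumulate_succ (f : ℕ → Set X) (n : ℕ) :
    Set.accumulate f (n + 1) = Set.accumulate f n ∪ f (n + 1) := by
  ext x
  simp only [Set.mem_accumulate, Set.mem_union, Nat.le_succ_iff]
  constructor
  · rintro ⟨y, hy | rfl, hx⟩
    · exact Or.inl ⟨y, hy, hx⟩
    · exact Or.inr hx
  · rintro (⟨y, hy, hx⟩ | hx)
    · exact ⟨y, Or.inl hy, hx⟩
    · exact ⟨n + 1, Or.inr rfl, hx⟩

lemma accumulate_zero' (f : ℕ → Set X) : Set.accumulate f 0 = f 0 := by
  ext x; simp [Set.mem_accumulate, Nat.le_zero]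

lemma Cyl.accumulate {σ : X → ℕ} {f : ℕ → Set X} (h : ∀ n, Cyl (G := G) σ (f n)) (N : ℕ) :
    Cyl (G := G) σ (Set.accumulate f N) := by
  induction N with
  | zero => rw [accumulate_zero']; exact h 0
  | succ n ih => rw [accumulate_succ]; exact ih.union (h (n + 1))

lemma genSA_le {σ : X → ℕ} (hσ : Measurable σ)
    (hmp : ∀ g : G, Measurable (fun x : X => g • x)) :
    genSA G σ ≤ (inferInstance : MeasurableSpace X) := by
  refine MeasurableSpace.generateFrom_le ?_
  rintro s ⟨g, i, rfl⟩
  exact (hσ.comp (hmp g⁻¹)) (measurableSet_singleton i)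

lemma joinOver_singleton (σ : X → ℕ) (g : G) (x : X) :
    joinOver ({g} : Finset G) σ x = Nat.pair (σ (g⁻¹ • x)) 0 := by
  rw [joinOver_eq]
  simp

lemma measurable_cyl {σ : X → ℕ} (hσ : Measurable σ)
    (hmp : ∀ g : G, Measurable (fun x : X => g • x)) {D : Set X}
    (hD : Cyl (G := G) σ D) : MeasurableSet D := by
  obtain ⟨F, J, rfl⟩ := hD
  exact measurable_joinOver hσ hmp F (Set.Countable.measurableSet (Set.to_countable J))

/-- Every set in the generated σ-algebra is approximated in measure by cylinder sets. -/
lemma approx_genSA (μ : Measure X) [IsProbabilityMeasure μ] {σ : X → ℕ}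
    (hσ : Measurable σ) (hmp : ∀ g : G, Measurable (fun x : X => g • x))
    {t : Set X} (ht : MeasurableSet[genSA G σ] t) :
    ∀ ε : ℝ≥0∞, 0 < ε → ∃ D : Set X, Cyl (G := G) σ D ∧ μ (t ∆ D) < ε := by
  have key : ∀ s : Set X, MeasurableSpace.GenerateMeasurable
      {s | ∃ (g : G) (i : ℕ), s = {x | σ (g⁻¹ • x) = i}} s →
      ∀ ε : ℝ≥0∞, 0 < ε → ∃ D : Set X, Cyl (G := G) σ D ∧ μ (s ∆ D) < ε := by
    intro s hs
    induction hs with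
    | basic u hu =>
      intro ε hε
      obtain ⟨g, i, rfl⟩ := hu
      refine ⟨{x | σ (g⁻¹ • x) = i}, ⟨{g}, {n | n.unpair.1 = i}, ?_⟩, by simpa using hε⟩
      ext x
      simp [joinOver_singleton, Nat.unpair_pair]
    | empty =>
      intro ε hε
      exact ⟨∅, Cyl.empty σ, by simpa using hε⟩
    | compl u hu ih =>
      intro ε hε
      obtain ⟨D, hD, hm⟩ := ih ε hε
      exact ⟨Dᶜ, hD.compl, by rwa [compl_symmDiff_compl]⟩
    | iUnion f hf ih =>
      intro ε hε
      rcases eq_or_ne ε ∞ with rfl | hεtop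
      · exact ⟨∅, Cyl.empty σ, measure_lt_top μ _⟩
      have hε2 : (0 : ℝ≥0∞) < ε / 2 := ENNReal.div_pos hε.ne' (by norm_num)
      have hε2top : ε / 2 ≠ ∞ := by
        simp [ENNReal.div_eq_top, hεtop]
      have hfm : ∀ n, MeasurableSet (f n) := fun n => genSA_le hσ hmp _ (hf n)
      have haccm : ∀ N, MeasurableSet (Set.accumulate f N) := by
        intro N
        induction N with
        | zero => rw [accumulate_zero']; exact hfm 0
        | succ n ih2 => rw [accumulate_succ]; exact ih2.union (hfm (n + 1))
      -- choose N with μ (⋃ f) < μ (Accumulate f N) + ε/2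
      have hN : ∃ N, μ (⋃ n, f n) < μ (Set.accumulate f N) + ε / 2 := by
        by_contra hcon
        push_neg at hcon
        have htend := MeasureTheory.tendsto_measure_iUnion_accumulate (μ := μ) (f := f)
        have htend2 : Filter.Tendsto (fun N => μ (Set.accumulate f N) + ε / 2)
            Filter.atTop (nhds (μ (⋃ n, f n) + ε / 2)) :=
          htend.add tendsto_const_nhds
        have hle : μ (⋃ n, f n) + ε / 2 ≤ μ (⋃ n, f n) :=
          le_of_tendsto htend2 (Filter.Eventually.of_forall hcon)
        have : ε / 2 ≤ 0 := by
          have hfin : μ (⋃ n, f n) ≠ ∞ := measure_ne_top μ _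
          exact (ENNReal.add_le_add_iff_left hfin).1 (by simpa using hle)
        exact absurd this (by simpa using hε2.ne')
      obtain ⟨N, hN⟩ := hN
      have hdiff : μ ((⋃ n, f n) \ Set.accumulate f N) < ε / 2 := by
        refine measure_diff_lt_of_lt_add (haccm N).nullMeasurableSet (fun x hx => ?_) (measure_ne_top μ _) hN
        exact Set.accumulate_subset_iUnion N hx
      -- approximate each f n for n ≤ N
      have hc : (0:ℝ≥0∞) < ε / 2 / (N + 1) :=
        ENNReal.div_pos hε2.ne' (by finiteness)
      choose D hDc hDm using fun n => ih n _ hc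
      refine ⟨Set.accumulate D N, Cyl.accumulate hDc N, ?_⟩
      have hsub : (⋃ n, f n) ∆ Set.accumulate D N ⊆
          ((⋃ n, f n) \ Set.accumulate f N) ∪
            (⋃ n ∈ Finset.range (N + 1), (f n ∆ D n)) := by
        rintro x (⟨hx1, hx2⟩ | ⟨hx1, hx2⟩)
        · by_cases h : x ∈ Set.accumulate f N
          · obtain ⟨n, hn, hfn⟩ := Set.mem_accumulate.1 h
            refine Or.inr (Set.mem_biUnion (Finset.mem_range.2 (Nat.lt_succ_of_le hn)) ?_)
            refine Or.inl ⟨hfn, fun hD' => hx2 ?_⟩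
            exact Set.mem_accumulate.2 ⟨n, hn, hD'⟩
          · exact Or.inl ⟨hx1, h⟩
        · obtain ⟨n, hn, hDn⟩ := Set.mem_accumulate.1 hx1
          refine Or.inr (Set.mem_biUnion (Finset.mem_range.2 (Nat.lt_succ_of_le hn)) ?_)
          exact Or.inr ⟨hDn, fun hf' => hx2 (Set.mem_iUnion.2 ⟨n, hf'⟩)⟩
      calc μ ((⋃ n, f n) ∆ Set.accumulate D N)
          ≤ μ ((⋃ n, f n) \ Set.accumulate f N) +
            μ (⋃ n ∈ Finset.range (N + 1), (f n ∆ D n)) :=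
            le_trans (measure_mono hsub) (measure_union_le _ _)
        _ ≤ μ ((⋃ n, f n) \ Set.accumulate f N) +
            ∑ n ∈ Finset.range (N + 1), μ (f n ∆ D n) := by
            gcongr
            exact measure_biUnion_finset_le _ _
        _ ≤ μ ((⋃ n, f n) \ Set.accumulate f N) +
            ∑ _n ∈ Finset.range (N + 1), ε / 2 / (N + 1) := by
            gcongr with n hn
            exact (hDm n).le
        _ ≤ μ ((⋃ n, f n) \ Set.accumulate f N) + ε / 2 := by
            gcongr
            rw [Finset.sum_const, Finset.card_range, nsmul_eq_mul, Nat.cast_add, Nat.cast_one]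
            exact ENNReal.mul_div_le
        _ < ε / 2 + ε / 2 := by
            exact ENNReal.add_lt_add_of_lt_of_le hε2top hdiff le_rfl
        _ = ε := ENNReal.add_halves ε
  exact key t ht

end Bowen
set_option linter.unusedSectionVars false
namespace Bowen

variable {X : Type*} [MeasurableSpace X] {G : Type*} [Group G] [MulAction G X]

/-- Given a generating partition `σ`, any finite partition `ρ` can be predicted, up to a set
of small measure, by a function of a finite join of translates of `σ`. -/
lemma exists_predictor (μ : Measure X) [IsProbabilityMeasure μ] {σ ρ : X → ℕ}
    (hσ : Measurable σ) (hρ : Measurable ρ) (hρfin : (Set.range ρ).Finite)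
    (hmp : ∀ g : G, Measurable (fun x : X => g • x))
    (hgen : IsGenerating G μ σ) (ε : ℝ≥0∞) (hε : 0 < ε) :
    ∃ (F : Finset G) (f : ℕ → ℕ), (∀ n, f n = 0 ∨ f n ∈ Set.range ρ) ∧
      μ {x | ρ x ≠ f (joinOver F σ x)} < ε := by
  classical
  rcases eq_or_ne ε ∞ with rfl | hεtop
  · exact ⟨∅, fun _ => 0, fun n => Or.inl rfl, measure_lt_top μ _⟩
  set I : Finset ℕ := hρfin.toFinset with hI
  set ε' : ℝ≥0∞ := ε / 2 / (I.card + 1) with hε'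
  have hε'pos : 0 < ε' := ENNReal.div_pos (ENNReal.div_pos hε.ne' (by norm_num)).ne'
    (by finiteness)
  -- approximate each atom of ρ by a cylinder set
  have hatom : ∀ i : ℕ, ∃ D : Set X, Cyl (G := G) σ D ∧
      (i ∈ I → μ ((ρ ⁻¹' {i}) ∆ D) < ε') := by
    intro i
    by_cases hi : i ∈ I
    · obtain ⟨t, htm, htμ⟩ := hgen (ρ ⁻¹' {i}) (hρ (measurableSet_singleton i))
      obtain ⟨D, hDc, hDμ⟩ := approx_genSA μ hσ hmp htm ε' hε'pos
      refine ⟨D, hDc, fun _ => ?_⟩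
      calc μ ((ρ ⁻¹' {i}) ∆ D) ≤ μ ((ρ ⁻¹' {i}) ∆ t) + μ (t ∆ D) := measure_symmDiff_le _ t _
        _ < ε' := by rw [htμ, zero_add]; exact hDμ
    · exact ⟨∅, Cyl.empty σ, fun h => absurd h hi⟩
  choose D hDc hDμ using hatom
  choose F' J' hFJ using hDc
  set F : Finset G := I.biUnion F' with hF
  have hr : ∀ i : ℕ, ∃ r : ℕ → ℕ, i ∈ I → ∀ x, joinOver (F' i) σ x = r (joinOver F σ x) := by
    intro i
    by_cases hi : i ∈ I
    · obtain ⟨r, hr⟩ := joinOver_mono (F' i) F σ (Finset.subset_biUnion_of_mem F' hi)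
      exact ⟨r, fun _ => hr⟩
    · exact ⟨id, fun h => absurd h hi⟩
  choose r hr using hr
  have hDeq : ∀ i, i ∈ I → ∀ x : X, (x ∈ D i ↔ r i (joinOver F σ x) ∈ J' i) := by
    intro i hi x
    rw [hFJ i]
    simp [Set.mem_preimage, hr i hi x]
  set f : ℕ → ℕ := fun n => (I.toList.find? (fun i => decide (r i n ∈ J' i))).getD 0 with hf
  refine ⟨F, f, ?_, ?_⟩
  · intro n
    rcases hfind : I.toList.find? (fun i => decide (r i n ∈ J' i)) with - | i
    · left; rw [hf]; simp only; rw [hfind]; rfl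
    · right
      have hiI : i ∈ I := by simpa using List.mem_of_find?_eq_some hfind
      have : f n = i := by rw [hf]; simp only; rw [hfind]; rfl
      rw [this]
      rw [hI] at hiI
      simpa using hiI
  · have hsub : {x | ρ x ≠ f (joinOver F σ x)} ⊆ ⋃ i ∈ I, ((ρ ⁻¹' {i}) ∆ D i) := by
      intro x hx
      have hiI : ρ x ∈ I := by rw [hI]; simp only [Set.Finite.mem_toFinset]; exact ⟨x, rfl⟩
      set n := joinOver F σ x with hn
      rcases hfind : I.toList.find? (fun i => decide (r i n ∈ J' i)) with - | i'
      · -- no match: in particular ρ x has no match, so x ∉ D (ρ x)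
        have hnm := List.find?_eq_none.1 hfind (ρ x) (by simpa using hiI)
        simp only [decide_eq_true_eq] at hnm
        have hxD : x ∉ D (ρ x) := fun hxD => hnm ((hDeq (ρ x) hiI x).1 hxD)
        exact Set.mem_biUnion hiI (Or.inl ⟨rfl, hxD⟩)
      · -- match i' : then f n = i' ≠ ρ x and x ∈ D i'
        have hp := List.find?_some hfind
        simp only [decide_eq_true_eq] at hp
        have hi'I : i' ∈ I := by simpa using List.mem_of_find?_eq_some hfind
        have hxD : x ∈ D i' := (hDeq i' hi'I x).2 hp
        have hfn : f n = i' := by rw [hf]; simp only; rw [hfind]; rfl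
        have hne : ρ x ≠ i' := fun h => hx (h.trans hfn.symm)
        exact Set.mem_biUnion hi'I (Or.inr ⟨hxD, hne⟩)
    calc μ {x | ρ x ≠ f (joinOver F σ x)} ≤ ∑ i ∈ I, μ ((ρ ⁻¹' {i}) ∆ D i) :=
          le_trans (measure_mono hsub) (measure_biUnion_finset_le _ _)
      _ ≤ ∑ _i ∈ I, ε' := Finset.sum_le_sum fun i hi => (hDμ i hi).le
      _ = I.card * ε' := by rw [Finset.sum_const, nsmul_eq_mul]
      _ ≤ (I.card + 1) * (ε / 2 / (I.card + 1)) := by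
          rw [hε']; gcongr; exact le_add_of_le_of_nonneg le_rfl (by norm_num)
      _ ≤ ε / 2 := ENNReal.mul_div_le
      _ < ε := ENNReal.half_lt_self hε.ne' hεtop

end Bowen
set_option linter.unusedSectionVars false
namespace Bowen

variable {X : Type*} [MeasurableSpace X]

lemma negMulLog_monotoneOn : MonotoneOn Real.negMulLog (Set.Icc 0 (Real.exp (-1))) := by
  have hc : Convex ℝ (Set.Icc (0:ℝ) (Real.exp (-1))) := convex_Icc _ _
  have hint : interior (Set.Icc (0:ℝ) (Real.exp (-1))) = Set.Ioo 0 (Real.exp (-1)) :=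
    interior_Icc
  refine monotoneOn_of_deriv_nonneg hc (Real.continuous_negMulLog.continuousOn) ?_ ?_
  · rw [hint]
    intro x hx
    exact (Real.differentiableAt_negMulLog hx.1.ne').differentiableWithinAt
  · rw [hint]
    intro x hx
    rw [Real.deriv_negMulLog hx.1.ne']
    have : Real.log x ≤ -1 := (Real.log_le_iff_le_exp hx.1).2 hx.2.le
    linarith

lemma condEntropy_le_of_close (μ : Measure X) [IsProbabilityMeasure μ] (u v : X → ℕ)
    (hu : Measurable u) (P Q : Finset ℕ)
    (hP : Set.range u ⊆ (P : Set ℕ)) (hQ : Set.range v ⊆ (Q : Set ℕ)) (ρ : ℕ → ℕ) (η : ℝ)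
    (hη0 : 0 ≤ η) (hη1 : η ≤ Real.exp (-1))
    (hclose : μ {x | u x ≠ ρ (v x)} ≤ ENNReal.ofReal η) :
    condEntropy μ u v ≤ (P.card * Q.card) * (η + Real.negMulLog η) := by
  classical
  have hημ : ∀ s : Set X, s ⊆ {x | u x ≠ ρ (v x)} → (μ s).toReal ≤ η := by
    intro s hs
    have : μ s ≤ ENNReal.ofReal η := le_trans (measure_mono hs) hclose
    calc (μ s).toReal ≤ (ENNReal.ofReal η).toReal :=
          ENNReal.toReal_mono ENNReal.ofReal_ne_top this
      _ = η := ENNReal.toReal_ofReal hη0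
  have hbound : ∀ p : ℕ × ℕ,
      -((μ (u ⁻¹' {p.1} ∩ v ⁻¹' {p.2})).toReal *
        Real.log ((μ (u ⁻¹' {p.1} ∩ v ⁻¹' {p.2})).toReal / (μ (v ⁻¹' {p.2})).toReal)) ≤
      η + Real.negMulLog η := by
    rintro ⟨i, j⟩
    set m : ℝ := (μ (u ⁻¹' {i} ∩ v ⁻¹' {j})).toReal with hm
    set mj : ℝ := (μ (v ⁻¹' {j})).toReal with hmj
    have hnn : 0 ≤ Real.negMulLog η :=
      Real.negMulLog_nonneg hη0 (le_trans hη1 (by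
        rw [← Real.exp_zero]; exact (Real.exp_le_exp.2 (by norm_num))))
    have hm0 : 0 ≤ m := ENNReal.toReal_nonneg
    have hmle : m ≤ mj := by
      rw [hm, hmj]
      exact ENNReal.toReal_mono (measure_ne_top μ _)
        (measure_mono Set.inter_subset_right)
    have hmj1 : mj ≤ 1 := by
      rw [hmj]
      exact ENNReal.toReal_le_of_le_ofReal one_pos.le (by simpa using prob_le_one)
    rcases eq_or_lt_of_le hm0 with hm0' | hmpos
    · rw [← hm0']
      simpa using add_nonneg hη0 hnn
    · have hmjpos : 0 < mj := lt_of_lt_of_le hmpos hmle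
      have hterm : -(m * Real.log (m / mj)) = m * Real.log (mj / m) := by
        rw [Real.log_div hmpos.ne' hmjpos.ne', Real.log_div hmjpos.ne' hmpos.ne']
        ring
      rw [hterm]
      by_cases hij : i = ρ j
      · -- good cell
        have hdiff : mj - m ≤ η := by
          have hsplit : μ (v ⁻¹' {j} ∩ u ⁻¹' {i}) + μ (v ⁻¹' {j} \ u ⁻¹' {i}) =
              μ (v ⁻¹' {j}) := measure_inter_add_diff _ (hu (measurableSet_singleton i))
          have h1 : mj - m = (μ (v ⁻¹' {j} \ u ⁻¹' {i})).toReal := by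
            rw [hmj, hm, Set.inter_comm, ← hsplit, ENNReal.toReal_add (measure_ne_top μ _)
              (measure_ne_top μ _)]
            ring
          rw [h1]
          refine hημ _ ?_
          rintro x ⟨hxv, hxu⟩
          simp only [Set.mem_preimage, Set.mem_singleton_iff] at hxv hxu
          intro hcon
          exact hxu (by rw [hxv] at hcon; rw [hcon, hij])
        have hlog : Real.log (mj / m) ≤ mj / m - 1 :=
          Real.log_le_sub_one_of_pos (div_pos hmjpos hmpos)
        calc m * Real.log (mj / m) ≤ m * (mj / m - 1) := by
              exact mul_le_mul_of_nonneg_left hlog hm0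
          _ = mj - m := by field_simp
          _ ≤ η := hdiff
          _ ≤ η + Real.negMulLog η := le_add_of_nonneg_right hnn
      · -- bad cell
        have hmη : m ≤ η := by
          rw [hm]
          refine hημ _ ?_
          rintro x ⟨hxu, hxv⟩
          simp only [Set.mem_preimage, Set.mem_singleton_iff] at hxu hxv
          intro hcon
          exact hij (by rw [← hxu, hcon, hxv])
        have hlog : Real.log (mj / m) ≤ Real.log (1 / m) := by
          refine Real.log_le_log (div_pos hmjpos hmpos) ?_
          gcongr
        calc m * Real.log (mj / m) ≤ m * Real.log (1 / m) := by
              exact mul_le_mul_of_nonneg_left hlog hm0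
          _ = Real.negMulLog m := by
              rw [one_div, Real.log_inv, Real.negMulLog]; ring
          _ ≤ Real.negMulLog η := by
              refine negMulLog_monotoneOn ⟨hm0, le_trans hmη hη1⟩ ⟨hη0, hη1⟩ hmη
          _ ≤ η + Real.negMulLog η := le_add_of_nonneg_left hη0
  -- the tsum reduces to a finite sum over P ×ˢ Q
  have hzero : ∀ p : ℕ × ℕ, p ∉ P ×ˢ Q →
      -((μ (u ⁻¹' {p.1} ∩ v ⁻¹' {p.2})).toReal *
        Real.log ((μ (u ⁻¹' {p.1} ∩ v ⁻¹' {p.2})).toReal / (μ (v ⁻¹' {p.2})).toReal)) = 0 := by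
    rintro ⟨i, j⟩ hp
    rw [Finset.mem_product] at hp
    push_neg at hp
    have : μ (u ⁻¹' {i} ∩ v ⁻¹' {j}) = 0 := by
      by_cases hi : i ∈ P
      · have hj := hp hi
        have : v ⁻¹' {j} = ∅ := by
          ext x
          simp only [Set.mem_preimage, Set.mem_singleton_iff, Set.mem_empty_iff_false,
            iff_false]
          intro h
          exact hj (by rw [← h]; exact hQ ⟨x, rfl⟩)
        rw [this, Set.inter_empty, measure_empty]
      · have : u ⁻¹' {i} = ∅ := by
          ext x
          simp only [Set.mem_preimage, Set.mem_singleton_iff, Set.mem_empty_iff_false,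
            iff_false]
          intro h
          exact hi (by rw [← h]; exact hP ⟨x, rfl⟩)
        rw [this, Set.empty_inter, measure_empty]
    rw [this]
    simp
  rw [condEntropy, tsum_eq_sum (s := P ×ˢ Q) hzero]
  calc ∑ p ∈ P ×ˢ Q, -((μ (u ⁻¹' {p.1} ∩ v ⁻¹' {p.2})).toReal *
        Real.log ((μ (u ⁻¹' {p.1} ∩ v ⁻¹' {p.2})).toReal / (μ (v ⁻¹' {p.2})).toReal))
      ≤ (P ×ˢ Q).card • (η + Real.negMulLog η) :=
        Finset.sum_le_card_nsmul _ _ _ (fun p _ => hbound p)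
    _ = (P.card * Q.card) * (η + Real.negMulLog η) := by
        rw [Finset.card_product, nsmul_eq_mul]; push_cast; ring

end Bowen
set_option linter.unusedSectionVars false
namespace Bowen

variable {X : Type*} [MeasurableSpace X] {G : Type*} [Group G] [MulAction G X]

lemma measurableSet_ne_fun {a b : X → ℕ} (ha : Measurable a) (hb : Measurable b) :
    MeasurableSet {x | a x ≠ b x} := by
  have : {x | a x ≠ b x} =
      (fun x => (a x, b x)) ⁻¹' ({p : ℕ × ℕ | p.1 = p.2}ᶜ) := rfl
  rw [this]
  exact (ha.prodMk hb) ((Set.to_countable _).measurableSet.compl)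

end Bowen
open Bowen

/-- Theorem 3.3: for a finite generating partition `α`, the set of finite
partitions combinatorially equivalent to `α` is dense, for the Rokhlin metric, in the set
of all finite generating partitions. -/
theorem combEquiv_dense {X : Type*} [MeasurableSpace X] {G : Type*} [Group G]
    [Countable G] [MulAction G X] (μ : Measure X) [IsProbabilityMeasure μ]
    (hmp : ∀ g : G, MeasurePreserving (fun x : X => g • x) μ μ)
    (α : X → ℕ) (hα : IsFinPart α) (hgenα : IsGenerating G μ α)
    (β : X → ℕ) (hβ : IsFinPart β) (hgenβ : IsGenerating G μ β)
    (ε : ℝ) (hε : 0 < ε) :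
    ∃ γ : X → ℕ, IsFinPart γ ∧ CombEquiv G μ α γ ∧ rokhlin μ γ β < ε := by
  classical
  obtain ⟨hαm, hαfin⟩ := hα
  obtain ⟨hβm, hβfin⟩ := hβ
  have hmpm : ∀ g : G, Measurable (fun x : X => g • x) := fun g => (hmp g).measurable
  set P : Finset ℕ := hαfin.toFinset with hP
  set Q : Finset ℕ := hβfin.toFinset with hQ
  set Q' : Finset ℕ := insert 0 Q with hQ'
  set T' : Finset ℕ := insert 0 (P.image (· + 1)) with hT'
  set R : Finset ℕ := (Q' ×ˢ T').image (fun p => Nat.pair p.1 p.2) with hR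
  set C : ℝ := (R.card * Q.card : ℕ) + (Q.card * R.card : ℕ) with hC
  -- choose the small parameter t
  have hcont : Continuous (fun t : ℝ => C * (t + Real.negMulLog t)) :=
    (continuous_const.mul (continuous_id.add Real.continuous_negMulLog))
  have htends : Filter.Tendsto (fun t : ℝ => C * (t + Real.negMulLog t)) (nhds 0)
      (nhds 0) := by
    have := hcont.tendsto 0
    simpa [Real.negMulLog_zero] using this
  have hev : {t : ℝ | C * (t + Real.negMulLog t) < ε} ∈ nhds (0 : ℝ) :=
    htends (Iio_mem_nhds hε)
  obtain ⟨δ₀, hδ₀pos, hball⟩ := Metric.mem_nhds_iff.1 hev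
  set t : ℝ := min (Real.exp (-1)) (δ₀ / 2) with htdef
  have ht0 : 0 < t := lt_min (Real.exp_pos _) (by linarith)
  have hte : t ≤ Real.exp (-1) := min_le_left _ _
  have htf : C * (t + Real.negMulLog t) < ε := by
    refine hball ?_
    simp only [Metric.mem_ball, Real.dist_eq, sub_zero, abs_of_pos ht0]
    calc t ≤ δ₀ / 2 := min_le_right _ _
      _ < δ₀ := by linarith
  have ht2 : 0 < t / 2 := by linarith
  set e : ℝ≥0∞ := ENNReal.ofReal (t / 2) / 2 with he
  have hepos : 0 < e := ENNReal.div_pos (ENNReal.ofReal_pos.2 ht2).ne' (by norm_num)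
  -- predictor of α from joins of β
  obtain ⟨K₀, h, -, hS0'⟩ := exists_predictor μ hβm hαm hαfin hmpm hgenβ e hepos
  set K : Finset G := insert 1 K₀ with hK
  obtain ⟨rK, hrK⟩ := joinOver_mono K₀ K β (Finset.subset_insert 1 K₀)
  set h' : ℕ → ℕ := h ∘ rK with hh'
  have hS0 : μ {x | α x ≠ h' (joinOver K β x)} < e := by
    have : {x | α x ≠ h' (joinOver K β x)} = {x | α x ≠ h (joinOver K₀ β x)} := by
      ext x
      simp [hh', hrK x]
    rw [this]
    exact hS0'
  set e' : ℝ≥0∞ := e / (K.card + 1) with he'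
  have he'pos : 0 < e' := ENNReal.div_pos hepos.ne' (by finiteness)
  have he'e : e' ≤ e := by
    rw [he']
    refine ENNReal.div_le_of_le_mul ?_
    exact le_mul_of_one_le_right' (by simp)
  -- predictor of β from joins of α
  obtain ⟨F, f, hfr, hS1⟩ := exists_predictor μ hαm hβm hβfin hmpm hgenα e' he'pos
  set β' : X → ℕ := fun x => f (joinOver F α x) with hβ'
  set S1 : Set X := {x | β' x ≠ β x} with hS1def
  have hS1m : MeasurableSet S1 :=
    measurableSet_ne_fun (Measurable.of_discrete.comp (measurable_joinOver hαm hmpm F)) hβm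
  have hS1μ : μ S1 < e' := by
    refine lt_of_le_of_lt (measure_mono ?_) hS1
    intro x hx
    exact fun hc => hx hc.symm
  have hβ'm : Measurable β' := Measurable.of_discrete.comp (measurable_joinOver hαm hmpm F)
  set τ : X → ℕ := fun x => if α x = h' (joinOver K β' x) then 0 else α x + 1 with hτ
  set γ : X → ℕ := joinN β' τ with hγ
  have hγx : ∀ x, γ x = Nat.pair (β' x) (τ x) := fun x => rfl
  have hτm : Measurable τ := by
    have hjm : Measurable (fun x => h' (joinOver K β' x)) :=
      (Measurable.of_discrete (f := h')).comp (measurable_joinOver hβ'm hmpm K)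
    have hsm : MeasurableSet {x | α x = h' (joinOver K β' x)} := by
      have h1 := (measurableSet_ne_fun hαm hjm).compl
      have h2 : {x | α x ≠ h' (joinOver K β' x)}ᶜ = {x | α x = h' (joinOver K β' x)} := by
        ext x; simp
      rwa [h2] at h1
    exact Measurable.ite hsm measurable_const (hαm.comp measurable_id |>.add measurable_const)
  have hγm : Measurable γ := measurable_joinN hβ'm hτm
  -- ranges
  have hβ'range : Set.range β' ⊆ (Q' : Set ℕ) := by
    rintro - ⟨x, rfl⟩
    rcases hfr (joinOver F α x) with h0 | hmem
    · rw [hβ']; simp [h0, hQ']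
    · rw [hQ']
      simp only [Finset.coe_insert, Set.mem_insert_iff]
      right
      rw [hQ]
      simpa using hmem
  have hτrange : Set.range τ ⊆ (T' : Set ℕ) := by
    rintro - ⟨x, rfl⟩
    rw [hτ, hT']
    by_cases hc : α x = h' (joinOver K β' x)
    · simp [hc]
    · simp only [if_neg hc, Finset.coe_insert, Set.mem_insert_iff]
      right
      simp only [Finset.coe_image, Set.mem_image, Finset.mem_coe]
      exact ⟨α x, by rw [hP]; simpa using ⟨x, rfl⟩, rfl⟩
  have hγrange : Set.range γ ⊆ (R : Set ℕ) := by
    rintro - ⟨x, rfl⟩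
    rw [hR]
    simp only [Finset.coe_image, Set.mem_image, Finset.mem_coe, Finset.mem_product]
    exact ⟨(β' x, τ x), ⟨by simpa using hβ'range ⟨x, rfl⟩, by simpa using hτrange ⟨x, rfl⟩⟩,
      rfl⟩
  have hγfin : IsFinPart γ := ⟨hγm, R.finite_toSet.subset hγrange⟩
  -- CombEquiv : α ≤ γ^K
  have h1K : (1 : G) ∈ K := Finset.mem_insert_self 1 K₀
  have hrefK : RefinesI μ (joinOver K γ) α := by
    obtain ⟨rB, hrB⟩ := exists_comp_joinOver K (joinOver K γ) β'
      (fun g n => (extN K.toList g n).unpair.1)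
      (fun g hg x => by
        show β' (g⁻¹ • x) = (Nat.unpair (extN K.toList g (joinOver K γ x))).1
        rw [extN_spec K γ g hg x, hγx, Nat.unpair_pair])
    refine ⟨fun n => if (extN K.toList 1 n).unpair.2 = 0 then h' (rB n)
      else (extN K.toList 1 n).unpair.2 - 1, MeasureTheory.ae_of_all μ fun x => ?_⟩
    have hext : extN K.toList 1 (joinOver K γ x) = γ x := by
      have := extN_spec K γ 1 h1K x
      simpa using this
    show α x = if (Nat.unpair (extN K.toList 1 (joinOver K γ x))).2 = 0 then
        h' (rB (joinOver K γ x)) else (Nat.unpair (extN K.toList 1 (joinOver K γ x))).2 - 1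
    rw [hext, hγx, Nat.unpair_pair, ← hrB x]
    by_cases hc : α x = h' (joinOver K β' x)
    · have hτ0 : τ x = 0 := by simp only [hτ]; rw [if_pos hc]
      rw [hτ0, if_pos rfl]
      exact hc
    · have hτ0 : τ x = α x + 1 := by simp only [hτ]; rw [if_neg hc]
      rw [hτ0, if_neg (Nat.succ_ne_zero _)]
      simp
  -- CombEquiv : γ ≤ α^M
  set M : Finset G := insert 1 (K.biUnion (fun g => F.image (g * ·)) ∪ F) with hM
  have hFM : F ⊆ M := fun e he =>
    Finset.mem_insert_of_mem (Finset.mem_union_right _ he)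
  have h1M : (1 : G) ∈ M := Finset.mem_insert_self 1 _
  have hrefM : RefinesI μ (joinOver M α) γ := by
    obtain ⟨rF, hrF⟩ := joinOver_mono F M α hFM
    have hsm : ∀ g : G, ∃ rg : ℕ → ℕ, g ∈ K →
        ∀ x, joinOver F α (g⁻¹ • x) = rg (joinOver M α x) := by
      intro g
      by_cases hg : g ∈ K
      · obtain ⟨rg, hrg⟩ := smul_joinOver g F M α (fun e he =>
          Finset.mem_insert_of_mem (Finset.mem_union_left _
            (Finset.mem_biUnion.2 ⟨g, hg, Finset.mem_image_of_mem _ he⟩)))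
        exact ⟨rg, fun _ => hrg⟩
      · exact ⟨id, fun hc => absurd hc hg⟩
    choose rg hrg using hsm
    obtain ⟨rKB, hrKB⟩ := exists_comp_joinOver K (joinOver M α) β'
      (fun g n => f (rg g n))
      (fun g hg x => by rw [hβ']; simp only; rw [hrg g hg x])
    refine ⟨fun n => Nat.pair (f (rF n))
      (if extN M.toList 1 n = h' (rKB n) then 0 else extN M.toList 1 n + 1),
      MeasureTheory.ae_of_all μ fun x => ?_⟩
    have hext : extN M.toList 1 (joinOver M α x) = α x := by
      have := extN_spec M α 1 h1M x
      simpa using this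
    show Nat.pair (β' x) (τ x) = Nat.pair (f (rF (joinOver M α x)))
      (if extN M.toList 1 (joinOver M α x) = h' (rKB (joinOver M α x)) then 0
        else extN M.toList 1 (joinOver M α x) + 1)
    rw [hext, ← hrKB x, ← hrF x]
  -- measure of the τ-error set
  set U : G → Set X := fun g => (fun x => g⁻¹ • x) ⁻¹' S1 with hU
  have hτsub : {x | τ x ≠ 0} ⊆ {x | α x ≠ h' (joinOver K β x)} ∪ ⋃ g ∈ K, U g := by
    intro x hx
    by_cases hu : x ∈ ⋃ g ∈ K, U g
    · exact Or.inr hu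
    · left
      have hagree : ∀ g ∈ K, β' (g⁻¹ • x) = β (g⁻¹ • x) := by
        intro g hg
        by_contra hc
        exact hu (Set.mem_biUnion hg hc)
      have hjoin : joinOver K β' x = joinOver K β x := by
        rw [joinOver_eq, joinOver_eq]
        congr 1
        exact List.map_congr_left fun g hg => hagree g (by simpa using hg)
      have hne : α x ≠ h' (joinOver K β' x) := by
        intro hc
        apply hx
        rw [hτ]
        simp [hc]
      show α x ≠ h' (joinOver K β x)
      rw [← hjoin]
      exact hne
  have hτμ : μ {x | τ x ≠ 0} ≤ ENNReal.ofReal (t / 2) := by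
    calc μ {x | τ x ≠ 0} ≤ μ ({x | α x ≠ h' (joinOver K β x)} ∪ ⋃ g ∈ K, U g) :=
          measure_mono hτsub
      _ ≤ μ {x | α x ≠ h' (joinOver K β x)} + μ (⋃ g ∈ K, U g) := measure_union_le _ _
      _ ≤ e + ∑ g ∈ K, μ (U g) :=
          add_le_add hS0.le (measure_biUnion_finset_le _ _)
      _ = e + ∑ _g ∈ K, μ S1 := by
          congr 1
          refine Finset.sum_congr rfl fun g _ => ?_
          exact (hmp g⁻¹).measure_preimage hS1m.nullMeasurableSet
      _ ≤ e + ∑ _g ∈ K, e' := by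
          gcongr
      _ ≤ e + e := by
          gcongr
          rw [Finset.sum_const, nsmul_eq_mul, he']
          calc (K.card : ℝ≥0∞) * (e / (K.card + 1)) ≤ ((K.card : ℝ≥0∞) + 1) * (e / (K.card + 1)) := by
                gcongr
                exact le_add_of_le_of_nonneg le_rfl (by norm_num)
            _ ≤ e := ENNReal.mul_div_le
      _ = ENNReal.ofReal (t / 2) := by rw [he, ENNReal.add_halves]
  have hS1bound : μ S1 ≤ ENNReal.ofReal (t / 2) := by
    calc μ S1 ≤ e' := hS1μ.le
      _ ≤ e := he'e
      _ ≤ ENNReal.ofReal (t / 2) := by rw [he]; exact ENNReal.half_le_self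
  -- closeness for the two conditional entropies
  have hclose1 : μ {x | γ x ≠ (fun j => Nat.pair j 0) (β x)} ≤ ENNReal.ofReal t := by
    have hsub : {x | γ x ≠ (fun j => Nat.pair j 0) (β x)} ⊆ S1 ∪ {x | τ x ≠ 0} := by
      intro x hx
      by_contra hc
      simp only [Set.mem_union, hS1def, Set.mem_setOf_eq, not_or, not_not] at hc
      obtain ⟨h1, h2⟩ := hc
      apply hx
      simp only [hγx x, h1, h2]
    calc μ {x | γ x ≠ (fun j => Nat.pair j 0) (β x)} ≤ μ S1 + μ {x | τ x ≠ 0} :=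
          le_trans (measure_mono hsub) (measure_union_le _ _)
      _ ≤ ENNReal.ofReal (t / 2) + ENNReal.ofReal (t / 2) := by gcongr
      _ = ENNReal.ofReal t := by
          rw [← ENNReal.ofReal_add (by linarith) (by linarith)]
          norm_num
  have hclose2 : μ {x | β x ≠ (fun n => n.unpair.1) (γ x)} ≤ ENNReal.ofReal t := by
    have hsub : {x | β x ≠ (fun n => n.unpair.1) (γ x)} ⊆ S1 := by
      intro x hx
      simp only [hS1def, Set.mem_setOf_eq]
      intro hc
      apply hx
      simp only [hγx x, Nat.unpair_pair]
      exact hc.symm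
    exact le_trans (measure_mono hsub) (le_trans hS1bound (by
      gcongr
      linarith))
  have hη0 : (0:ℝ) ≤ t := ht0.le
  have hent1 : condEntropy μ γ β ≤ (R.card * Q.card) * (t + Real.negMulLog t) :=
    condEntropy_le_of_close μ γ β hγm R Q hγrange (by rw [hQ]; intro y hy; simpa using hy)
      (fun j => Nat.pair j 0) t hη0 hte hclose1
  have hent2 : condEntropy μ β γ ≤ (Q.card * R.card) * (t + Real.negMulLog t) :=
    condEntropy_le_of_close μ β γ hβm Q R (by rw [hQ]; intro y hy; simpa using hy) hγrange
      (fun n => n.unpair.1) t hη0 hte hclose2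
  refine ⟨γ, hγfin, ⟨K, M, hrefK, hrefM⟩, ?_⟩
  calc rokhlin μ γ β = condEntropy μ γ β + condEntropy μ β γ := rfl
    _ ≤ (R.card * Q.card) * (t + Real.negMulLog t) +
        (Q.card * R.card) * (t + Real.negMulLog t) := add_le_add hent1 hent2
    _ = C * (t + Real.negMulLog t) := by rw [hC]; push_cast; ring
    _ < ε := htf
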